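/- Let K = ℚ(ζ₈) be the 8th cyclotomic field with ring of integers ℤ_K, t = ζ₈, and let 𝔫 be the ideal of ℤ_K generated by 5t³ + 5t - 4. Then the congruence subgroup Γ₀(𝔫) ≤ GL₂(ℤ_K) contains no element of order 3; that is, every g ∈ Γ₀(𝔫) with g³ = 1 satisfies g = 1. -/

import Mathlib

open Matrix NumberField

/-- The congruence subgroup `Γ₀(I)` of `GL₂(R)`: invertible `2 × 2` matrices over `R`
whose lower-left entry lies in the ideal `I`. -/
def Gamma0 {R : Type*} [CommRing R] (I : Ideal R) : Subgroup (GL (Fin 2) R) where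
  carrier := { g | (g : Matrix (Fin 2) (Fin 2) R) 1 0 ∈ I }
  one_mem' := by
    simp [Matrix.one_apply_ne (show (1 : Fin 2) ≠ 0 by decide)]
  mul_mem' := by
    intro a b ha hb
    simp only [Set.mem_setOf_eq, Units.val_mul, Matrix.mul_apply, Fin.sum_univ_two] at *
    exact add_mem (I.mul_mem_right _ ha) (I.mul_mem_left _ hb)
  inv_mem' := by
    intro a ha
    simp only [Set.mem_setOf_eq] at *
    rw [Matrix.coe_units_inv, Matrix.inv_def, Matrix.adjugate_fin_two, Matrix.smul_apply]
    have h10 : (!![(a : Matrix (Fin 2) (Fin 2) R) 1 1, -(a : Matrix (Fin 2) (Fin 2) R) 0 1;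
        -(a : Matrix (Fin 2) (Fin 2) R) 1 0, (a : Matrix (Fin 2) (Fin 2) R) 0 0]) 1 0
        = -((a : Matrix (Fin 2) (Fin 2) R) 1 0) := by simp
    rw [h10, smul_eq_mul, mul_neg]
    exact I.neg_mem (I.mul_mem_left _ ha)

open Polynomial in
/-- There is a ring homomorphism from the ring of integers of `ℚ(ζ₈)` to `𝔽₂`,
sending a primitive `8`-th root of unity to `1`. -/
lemma exists_hom_F2 (t : 𝓞 (CyclotomicField 8 ℚ)) (ht : IsPrimitiveRoot t 8) :
    ∃ φ : 𝓞 (CyclotomicField 8 ℚ) →+* ZMod 2, φ t = 1 := by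
  haveI : Fact (Nat.Prime 2) := ⟨Nat.prime_two⟩
  have h8 : ((2 : ℕ) ^ 3) = (8 : ℕ) := rfl
  haveI : IsCyclotomicExtension {(2 : ℕ) ^ 3} ℚ (CyclotomicField 8 ℚ) := by
    exact CyclotomicField.isCyclotomicExtension 8 ℚ
  have hζ : IsPrimitiveRoot (algebraMap (𝓞 (CyclotomicField 8 ℚ)) (CyclotomicField 8 ℚ) t)
      ((((2 : ℕ) ^ 3) : ℕ) : ℕ) :=
    ht.map_of_injective RingOfIntegers.coe_injective
  let pb := hζ.integralPowerBasis
  have hgen : pb.gen = t := by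
    rw [IsPrimitiveRoot.integralPowerBasis_gen]
    rfl
  have hmin : minpoly ℤ pb.gen = cyclotomic 8 ℤ := by
    rw [hgen]
    have h1 : minpoly ℤ t = minpoly ℤ
        (algebraMap (𝓞 (CyclotomicField 8 ℚ)) (CyclotomicField 8 ℚ) t) :=
      (minpoly.algebraMap_eq RingOfIntegers.coe_injective t).symm
    rw [h1]
    convert (cyclotomic_eq_minpoly hζ (by norm_num)).symm using 2
    · exact Subsingleton.elim _ _
    · norm_num
  have hy : (aeval (1 : ZMod 2)) (minpoly ℤ pb.gen) = 0 := by
    rw [hmin, aeval_def, ← Polynomial.eval_map, map_cyclotomic]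
    have : (8 : ℕ) = 2 ^ (2 + 1) := by norm_num
    rw [this, eval_one_cyclotomic_prime_pow]
    rfl
  refine ⟨(pb.lift (1 : ZMod 2) hy).toRingHom, ?_⟩
  have := pb.lift_gen (1 : ZMod 2) hy
  rw [hgen] at this
  exact this

/-- If a domain `R` admits a ring homomorphism to `𝔽₂` killing `m`, then any `g ∈ Γ₀((m))`
with `g ^ 3 = 1` is trivial. -/
lemma order_three_aux (R : Type*) [CommRing R] [IsDomain R] (φ : R →+* ZMod 2)
    (m : R) (hm : φ m = 0)
    (g : GL (Fin 2) R) (hc : g.val 1 0 ∈ Ideal.span {m}) (hg : g ^ 3 = 1) : g = 1 := by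
  have h3 : g.val * g.val * g.val = 1 := by
    have := congrArg Units.val hg
    simpa [pow_succ] using this
  set a := g.val 0 0 with ha
  set b := g.val 0 1 with hb
  set c := g.val 1 0 with hcdef
  set d := g.val 1 1 with hd
  have E : ∀ i j, (g.val * g.val * g.val) i j = (1 : Matrix (Fin 2) (Fin 2) R) i j := by
    intro i j; rw [h3]
  have e00 := E 0 0
  have e01 := E 0 1
  have e10 := E 1 0
  have e11 := E 1 1
  simp only [Matrix.mul_apply, Fin.sum_univ_two, Matrix.one_apply_eq,
    Matrix.one_apply_ne, ← ha, ← hb, ← hcdef, ← hd, (by decide : (0 : Fin 2) ≠ 1),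
    (by decide : (1 : Fin 2) ≠ 0), ne_eq, not_false_eq_true] at e00 e01 e10 e11
  set u := a * a + a * d + d * d + b * c with hu
  have hub : u * b = 0 := by rw [hu]; linear_combination e01
  have huc : u * c = 0 := by rw [hu]; linear_combination e10
  have hua : u * a = 1 + (a + d) * (a * d - b * c) := by rw [hu]; linear_combination e00
  have hud : u * d = 1 + (a + d) * (a * d - b * c) := by rw [hu]; linear_combination e11
  have hφ2 : ∀ x : ZMod 2, x ^ 2 + x + 1 ≠ 0 := by decide
  have hφ3 : ∀ x : ZMod 2, x ^ 2 - x + 1 ≠ 0 := by decide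
  have key : ∀ x y : ZMod 2, x * y = 1 → x + y = -1 → False := by decide
  rcases eq_or_ne u 0 with hu0 | hu0
  · exfalso
    have htd : (a + d) * (a * d - b * c) = -1 := by
      linear_combination -1 * hua + a * hu0
    have hdet : a * d - b * c = (a + d) ^ 2 := by
      linear_combination -1 * hu0
    have htr3 : (a + d + 1) * ((a + d) ^ 2 - (a + d) + 1) = 0 := by
      linear_combination htd - (a + d) * hdet
    rcases mul_eq_zero.mp htr3 with htr | htr
    · have htr' : a + d = -1 := by linear_combination htr
      have hdet1 : a * d - b * c = 1 := by rw [hdet, htr']; ring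
      obtain ⟨z, hz⟩ := Ideal.mem_span_singleton.mp hc
      have hφc : φ c = 0 := by rw [hz, _root_.map_mul, hm, zero_mul]
      have h1 : φ a * φ d = 1 := by
        have := congrArg φ hdet1
        simp only [_root_.map_sub, _root_.map_mul, _root_.map_one, hφc, mul_zero,
          sub_zero] at this
        exact this
      have h2 : φ a + φ d = -1 := by
        have := congrArg φ htr'
        simpa only [_root_.map_add, _root_.map_neg, _root_.map_one] using this
      exact key _ _ h1 h2
    · have := congrArg φ htr
      simp only [_root_.map_add, _root_.map_sub, _root_.map_pow, _root_.map_one,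
        _root_.map_zero] at this
      exact hφ3 (φ a + φ d) this
  · have hb0 : b = 0 := by rcases mul_eq_zero.mp hub with h | h; exact absurd h hu0; exact h
    have hc0 : c = 0 := by rcases mul_eq_zero.mp huc with h | h; exact absurd h hu0; exact h
    have had : a = d := by
      have h0 : u * (a - d) = 0 := by rw [mul_sub, hua, hud]; ring
      rcases mul_eq_zero.mp h0 with h | h
      · exact absurd h hu0
      · exact sub_eq_zero.mp h
    have ha3 : a ^ 3 = 1 := by
      rw [hb0, hc0] at e00; linear_combination e00
    have hfac : (a - 1) * (a ^ 2 + a + 1) = 0 := by linear_combination ha3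
    have ha1 : a = 1 := by
      rcases mul_eq_zero.mp hfac with h | h
      · exact sub_eq_zero.mp h
      · exfalso
        have := congrArg φ h
        simp only [_root_.map_add, _root_.map_pow, _root_.map_one, _root_.map_zero] at this
        exact hφ2 (φ a) this
    ext i j
    fin_cases i <;> fin_cases j <;>
      simp [← ha, ← hb, ← hcdef, ← hd, hb0, hc0, ha1, had.symm, Matrix.one_apply]

/-- In `K = ℚ(ζ_8)` with ring of integers `ℤ_K`, `t = ζ_8` and `𝔫 = (5 * t ^ 3 + 5 * t - 4)`,
the congruence subgroup `Γ₀(𝔫) ≤ GL₂(ℤ_K)` contains no element of order `3`: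
every `g ∈ Γ₀(𝔫)` with `g³ = 1` satisfies `g = 1`. -/
theorem no_order_three (t : 𝓞 (CyclotomicField 8 ℚ)) (ht : IsPrimitiveRoot t 8) :
    ∀ g ∈ Gamma0 (Ideal.span {(5 * t ^ 3 + 5 * t - 4 : 𝓞 (CyclotomicField 8 ℚ))}),
      g ^ 3 = 1 → g = 1 := by
  obtain ⟨φ, hφt⟩ := exists_hom_F2 t ht
  intro g hgmem hg3
  have hm : φ (5 * t ^ 3 + 5 * t - 4) = 0 := by
    simp only [_root_.map_sub, _root_.map_add, _root_.map_mul, _root_.map_pow,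
      _root_.map_ofNat, hφt]
    decide
  exact order_three_aux _ φ _ hm g hgmem hg3
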